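/- Let -1 < ρ₁ < ρ₂ < 1, let Λ(ρ, α, ρ₁) = ((1-ρ₁)^{1-sin α}(1+ρ₁)^{1+sin α})/((1-ρ)^{1-sin α}(1+ρ)^{1+sin α}), and suppose α₀ ∈ (0, π/2) satisfies Λ(ρ₂, α₀, ρ₁) = 1. Then Λ(ρ, α₀, ρ₁) < 1 for all ρ with ρ₁ < ρ < ρ₂. -/

import Mathlib

open Real

/-- `Λ(ρ,α,ρ₁) = ((1-ρ₁)^{1-sin α}(1+ρ₁)^{1+sin α})/((1-ρ)^{1-sin α}(1+ρ)^{1+sin α})`. -/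
noncomputable def Lambda (ρ α ρ₁ : ℝ) : ℝ :=
  ((1 - ρ₁) ^ (1 - Real.sin α) * (1 + ρ₁) ^ (1 + Real.sin α)) /
    ((1 - ρ) ^ (1 - Real.sin α) * (1 + ρ) ^ (1 + Real.sin α))

theorem Lambda_lt_one_between (ρ₁ ρ₂ α₀ : ℝ)
    (h1 : -1 < ρ₁) (h2 : ρ₁ < ρ₂) (h3 : ρ₂ < 1) (hα₀ : α₀ ∈ Set.Ioo 0 (π / 2))
    (hroot : Lambda ρ₂ α₀ ρ₁ = 1) :
    ∀ ρ : ℝ, ρ₁ < ρ → ρ < ρ₂ → Lambda ρ α₀ ρ₁ < 1 := by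
  intro ρ hl hr
  set s := Real.sin α₀ with hs
  have hs1 : s < 1 := by
    have := Real.sin_lt_sin_of_lt_of_le_pi_div_two (x := α₀) (y := π / 2)
      (by nlinarith [Real.pi_pos, hα₀.1, hα₀.2]) le_rfl hα₀.2
    simpa using this
  have hsm1 : -1 < s := by
    have := Real.neg_one_le_sin α₀
    nlinarith [Real.sin_pos_of_pos_of_lt_pi hα₀.1 (by nlinarith [Real.pi_pos, hα₀.2])]
  -- positivity facts
  have p1 : (0:ℝ) < 1 - ρ₁ := by linarith
  have p2 : (0:ℝ) < 1 + ρ₁ := by linarith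
  have p3 : (0:ℝ) < 1 - ρ := by linarith
  have p4 : (0:ℝ) < 1 + ρ := by linarith
  have p5 : (0:ℝ) < 1 - ρ₂ := by linarith
  have p6 : (0:ℝ) < 1 + ρ₂ := by linarith
  set g : ℝ → ℝ := fun x => (1 - s) * Real.log (1 - x) + (1 + s) * Real.log (1 + x) with hg
  have hD : ∀ x : ℝ, 0 < 1 - x → 0 < 1 + x →
      (1 - x) ^ (1 - s) * (1 + x) ^ (1 + s) = Real.exp (g x) := by
    intro x hx1 hx2
    rw [hg, Real.exp_add, ← Real.log_rpow hx1, ← Real.log_rpow hx2, Real.exp_log (by positivity),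
      Real.exp_log (by positivity)]
  -- g ρ₂ = g ρ₁ from hroot
  have hD2pos : (0:ℝ) < (1 - ρ₂) ^ (1 - s) * (1 + ρ₂) ^ (1 + s) := by positivity
  have heq : g ρ₂ = g ρ₁ := by
    have : (1 - ρ₁) ^ (1 - s) * (1 + ρ₁) ^ (1 + s)
        = (1 - ρ₂) ^ (1 - s) * (1 + ρ₂) ^ (1 + s) := by
      have := hroot
      rw [Lambda, div_eq_one_iff_eq (ne_of_gt hD2pos)] at this
      exact this
    rw [hD ρ₂ p5 p6, hD ρ₁ p1 p2] at this
    exact (Real.exp_eq_exp.mp this.symm)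
  -- convex combination
  set a : ℝ := (ρ₂ - ρ) / (ρ₂ - ρ₁) with ha
  set b : ℝ := (ρ - ρ₁) / (ρ₂ - ρ₁) with hb
  have hd : (0:ℝ) < ρ₂ - ρ₁ := by linarith
  have hap : 0 < a := div_pos (by linarith) hd
  have hbp : 0 < b := div_pos (by linarith) hd
  have hab : a + b = 1 := by rw [ha, hb]; field_simp; ring
  have hcomb : ρ = a * ρ₁ + b * ρ₂ := by rw [ha, hb]; field_simp; ring
  -- strict concavity of g
  have key : a * g ρ₁ + b * g ρ₂ < g ρ := by
    have hlog1 : a * Real.log (1 - ρ₁) + b * Real.log (1 - ρ₂) < Real.log (1 - ρ) := by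
      have := strictConcaveOn_log_Ioi.2 (Set.mem_Ioi.mpr p1) (Set.mem_Ioi.mpr p5)
        (by intro h; linarith) hap hbp hab
      simp only [smul_eq_mul] at this
      have hx : a * (1 - ρ₁) + b * (1 - ρ₂) = 1 - ρ := by
        rw [hcomb, ha, hb]; field_simp; ring
      rw [hx] at this; linarith
    have hlog2 : a * Real.log (1 + ρ₁) + b * Real.log (1 + ρ₂) < Real.log (1 + ρ) := by
      have := strictConcaveOn_log_Ioi.2 (Set.mem_Ioi.mpr p2) (Set.mem_Ioi.mpr p6)
        (by intro h; linarith) hap hbp hab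
      simp only [smul_eq_mul] at this
      have hx : a * (1 + ρ₁) + b * (1 + ρ₂) = 1 + ρ := by
        rw [hcomb, ha, hb]; field_simp; ring
      rw [hx] at this; linarith
    have H1 := mul_lt_mul_of_pos_left hlog1 (show (0:ℝ) < 1 - s by linarith)
    have H2 := mul_lt_mul_of_pos_left hlog2 (show (0:ℝ) < 1 + s by linarith)
    calc a * g ρ₁ + b * g ρ₂
        = (1 - s) * (a * Real.log (1 - ρ₁) + b * Real.log (1 - ρ₂))
          + (1 + s) * (a * Real.log (1 + ρ₁) + b * Real.log (1 + ρ₂)) := by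
          simp only [hg]; ring
      _ < (1 - s) * Real.log (1 - ρ) + (1 + s) * Real.log (1 + ρ) := add_lt_add H1 H2
      _ = g ρ := by simp only [hg]
  have hgt : g ρ₁ < g ρ := by
    rw [heq] at key
    calc g ρ₁ = a * g ρ₁ + b * g ρ₁ := by rw [← add_mul, hab, one_mul]
      _ < g ρ := key
  -- conclude
  have hDρpos : (0:ℝ) < (1 - ρ) ^ (1 - s) * (1 + ρ) ^ (1 + s) := by positivity
  rw [Lambda, div_lt_one hDρpos, hD ρ p3 p4, hD ρ₁ p1 p2]
  exact Real.exp_lt_exp.mpr hgt
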